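/- Fourier decomposition over the simplex: Let F = F_p be a prime finite field, n ∈ ℕ, and g : F^n → F. For a ∈ F^n, b ∈ F define ℓ_{a,b} : F^n → F by ℓ_{a,b}(x) = ⟨a, x⟩ + b. Then there exist unique real coefficients α_{a,b}, indexed by a ∈ F^n and b ∈ F \ {0}, such that q(g) = Σ_{a ∈ F^n, b ≠ 0} α_{a,b} · q(ℓ_{a,b}) (as functions F^n → ℝ^F). Moreover, these coefficients are given by α_{a,b} = ⟨q(g), q(ℓ_{a,b})⟩ − ⟨q(g), q(ℓ_{a,0})⟩ and satisfy α_{a,b} ∈ [−1, 1]. -/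
import Mathlib


/-- The centered simplex embedding `q(f) = p(f) - 1/|F|` of a function `f : F^n → F`. -/
noncomputable def qfun {p n : ℕ} (f : (Fin n → ZMod p) → ZMod p) :
    (Fin n → ZMod p) → ZMod p → ℝ :=
  fun x y => (if f x = y then 1 else 0) - ((p : ℝ))⁻¹

/-- The inner product `⟨u, v⟩ = E_{x ∈ F^n} Σ_{y ∈ F} u(x)_y v(x)_y`. -/
noncomputable def innerE {p n : ℕ} [NeZero p] (u v : (Fin n → ZMod p) → ZMod p → ℝ) : ℝ :=
  (∑ x : Fin n → ZMod p, ∑ y : ZMod p, u x y * v x y) /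
    (Fintype.card (Fin n → ZMod p) : ℝ)

/-- The affine-linear function `ℓ_{a,b}(x) = ⟨a, x⟩ + b`. -/
def affLin {p n : ℕ} (a : Fin n → ZMod p) (b : ZMod p) : (Fin n → ZMod p) → ZMod p :=
  fun x => (∑ i, a i * x i) + b

section Helpers
open Finset

lemma count_lin {p n : ℕ} [Fact p.Prime] (d : Fin n → ZMod p) (hd : d ≠ 0) (c : ZMod p) :
    (Finset.univ.filter (fun v : Fin n → ZMod p => ∑ i, d i * v i = c)).card * p
      = Fintype.card (Fin n → ZMod p) := by
  classical
  obtain ⟨j, hj⟩ : ∃ j, d j ≠ 0 := by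
    by_contra h; push_neg at h; exact hd (funext h)
  set e : Fin n → ZMod p := fun i => if i = j then (d j)⁻¹ else 0 with he
  have hde : ∑ i, d i * e i = 1 := by
    rw [Finset.sum_eq_single j]
    · simp [he, mul_inv_cancel₀ hj]
    · intro i _ hij; simp [he, hij]
    · simp
  have hshift : ∀ (t : ZMod p) (v : Fin n → ZMod p),
      ∑ i, d i * (v i + t * e i) = (∑ i, d i * v i) + t := by
    intro t v
    simp only [mul_add, Finset.sum_add_distrib]
    congr 1
    calc ∑ i, d i * (t * e i) = t * ∑ i, d i * e i := by
          rw [Finset.mul_sum]; exact Finset.sum_congr rfl fun i _ => by ring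
      _ = t := by rw [hde, mul_one]
  -- all fibers have equal cardinality
  have hcard : ∀ c₁ c₂ : ZMod p,
      (Finset.univ.filter (fun v : Fin n → ZMod p => ∑ i, d i * v i = c₁)).card =
      (Finset.univ.filter (fun v : Fin n → ZMod p => ∑ i, d i * v i = c₂)).card := by
    intro c₁ c₂
    apply Finset.card_bij' (fun v _ => v + (c₂ - c₁) • e) (fun v _ => v + (c₁ - c₂) • e)
    · intro v hv
      simp only [Finset.mem_filter, Finset.mem_univ, true_and] at hv ⊢
      have := hshift (c₂ - c₁) v
      simp only [Pi.add_apply, Pi.smul_apply, smul_eq_mul] at *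
      rw [this, hv]; ring
    · intro v hv
      simp only [Finset.mem_filter, Finset.mem_univ, true_and] at hv ⊢
      have := hshift (c₁ - c₂) v
      simp only [Pi.add_apply, Pi.smul_apply, smul_eq_mul] at *
      rw [this, hv]; ring
    · intro v _; funext i; simp [smul_eq_mul]; ring
    · intro v _; funext i; simp [smul_eq_mul]; ring
  have hpart : (Finset.univ : Finset (Fin n → ZMod p)).card =
      ∑ c' : ZMod p, (Finset.univ.filter (fun v : Fin n → ZMod p => ∑ i, d i * v i = c')).card :=
    Finset.card_eq_sum_card_fiberwise (fun x _ => Finset.mem_univ _)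
  have : ∑ c' : ZMod p, (Finset.univ.filter (fun v : Fin n → ZMod p => ∑ i, d i * v i = c')).card
      = (Finset.univ.filter (fun v : Fin n → ZMod p => ∑ i, d i * v i = c)).card * p := by
    rw [Finset.sum_congr rfl (fun c' _ => hcard c' c), Finset.sum_const, Finset.card_univ,
      ZMod.card, smul_eq_mul, mul_comm]
  rw [← this, ← hpart, Finset.card_univ]

lemma count_lin_real {p n : ℕ} [Fact p.Prime] (d : Fin n → ZMod p) (hd : d ≠ 0) (c : ZMod p) :
    ∑ v : Fin n → ZMod p, ((if ∑ i, d i * v i = c then (1:ℝ) else 0) - (p:ℝ)⁻¹) = 0 := by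
  have hp : (p:ℝ) ≠ 0 := Nat.cast_ne_zero.mpr (Fact.out (p := p.Prime)).pos.ne'
  rw [Finset.sum_sub_distrib, Finset.sum_boole, Finset.sum_const, Finset.card_univ,
    nsmul_eq_mul]
  have := count_lin d hd c
  have h2 : ((Finset.univ.filter (fun v : Fin n → ZMod p => ∑ i, d i * v i = c)).card : ℝ) * p
      = (Fintype.card (Fin n → ZMod p) : ℝ) := by exact_mod_cast congrArg Nat.cast this
  rw [sub_eq_zero, ← h2]
  field_simp


lemma innerE_qfun {p n : ℕ} [Fact p.Prime] (f h : (Fin n → ZMod p) → ZMod p) :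
    innerE (qfun f) (qfun h) =
      (∑ x : Fin n → ZMod p, ((if f x = h x then (1:ℝ) else 0) - (p:ℝ)⁻¹)) /
        (Fintype.card (Fin n → ZMod p) : ℝ) := by
  have hp : (p:ℝ) ≠ 0 := Nat.cast_ne_zero.mpr (Fact.out (p := p.Prime)).pos.ne'
  unfold innerE qfun
  congr 1
  refine Finset.sum_congr rfl fun x _ => ?_
  have key : ∀ y : ZMod p,
      ((if f x = y then (1:ℝ) else 0) - (p:ℝ)⁻¹) * ((if h x = y then 1 else 0) - (p:ℝ)⁻¹)
      = (if f x = y then (if h x = y then (1:ℝ) else 0) else 0)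
        - (p:ℝ)⁻¹ * (if f x = y then 1 else 0)
        - (p:ℝ)⁻¹ * (if h x = y then 1 else 0) + (p:ℝ)⁻¹ ^ 2 := by
    intro y; by_cases h1 : f x = y <;> by_cases h2 : h x = y <;> simp [h1, h2] <;> ring
  rw [Finset.sum_congr rfl fun y _ => key y]
  simp only [Finset.sum_add_distrib, Finset.sum_sub_distrib, ← Finset.mul_sum]
  have e1 : ∑ y : ZMod p, (if f x = y then (if h x = y then (1:ℝ) else 0) else 0)
      = (if f x = h x then (1:ℝ) else 0) := by
    rw [Finset.sum_ite_eq]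
    simp [eq_comm]
  have e2 : ∑ y : ZMod p, (if f x = y then (1:ℝ) else 0) = 1 := by
    rw [Finset.sum_ite_eq]; simp
  have e3 : ∑ y : ZMod p, (if h x = y then (1:ℝ) else 0) = 1 := by
    rw [Finset.sum_ite_eq]; simp
  have e4 : ∑ _y : ZMod p, (p:ℝ)⁻¹ ^ 2 = (p:ℝ)⁻¹ := by
    rw [Finset.sum_const, Finset.card_univ, ZMod.card, nsmul_eq_mul, sq]
    field_simp
  rw [e1, e2, e3, e4]
  ring

lemma innerE_affLin {p n : ℕ} [Fact p.Prime] (a' a : Fin n → ZMod p) (b' b : ZMod p) :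
    innerE (qfun (affLin a' b')) (qfun (affLin a b)) =
      if a' = a then ((if b' = b then (1:ℝ) else 0) - (p:ℝ)⁻¹) else 0 := by
  have hN : (0:ℝ) < (Fintype.card (Fin n → ZMod p) : ℝ) := by
    exact_mod_cast Fintype.card_pos
  rw [innerE_qfun]
  by_cases ha : a' = a
  · subst ha
    have : ∀ x : Fin n → ZMod p, (affLin a' b' x = affLin a' b x) = (b' = b) := by
      intro x; unfold affLin; simp
    simp only [this]
    rw [Finset.sum_const, Finset.card_univ, nsmul_eq_mul, if_pos trivial,
      mul_div_assoc, mul_comm, div_mul_cancel₀ _ hN.ne']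
  · rw [if_neg ha]
    have hd : (fun i => a' i - a i) ≠ 0 := by
      intro h
      apply ha; funext i
      have := congrFun h i
      simpa [sub_eq_zero] using this
    have key : ∀ x : Fin n → ZMod p,
        (affLin a' b' x = affLin a b x) = (∑ i, (a' i - a i) * x i = b - b') := by
      intro x; unfold affLin
      apply propext
      have : ∑ i, (a' i - a i) * x i = (∑ i, a' i * x i) - ∑ i, a i * x i := by
        rw [← Finset.sum_sub_distrib]; exact Finset.sum_congr rfl fun i _ => by ring
      rw [this]
      constructor <;> intro h <;> linear_combination h
    simp only [key]
    rw [count_lin_real _ hd, zero_div]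

lemma decomp_exists {p n : ℕ} [Fact p.Prime] (g : (Fin n → ZMod p) → ZMod p)
    (x : Fin n → ZMod p) (y : ZMod p) :
    qfun g x y =
      ∑ a : Fin n → ZMod p, ∑ b ∈ Finset.univ.filter (fun b : ZMod p => b ≠ 0),
        (innerE (qfun g) (qfun (affLin a b)) - innerE (qfun g) (qfun (affLin a 0))) *
          qfun (affLin a b) x y := by
  classical
  have hp : (p:ℝ) ≠ 0 := Nat.cast_ne_zero.mpr (Fact.out (p := p.Prime)).pos.ne'
  have hN : (0:ℝ) < (Fintype.card (Fin n → ZMod p) : ℝ) := by exact_mod_cast Fintype.card_pos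
  set N : ℝ := (Fintype.card (Fin n → ZMod p) : ℝ) with hNdef
  -- coefficient formula
  have hα : ∀ a b, innerE (qfun g) (qfun (affLin a b)) - innerE (qfun g) (qfun (affLin a 0))
      = (∑ z : Fin n → ZMod p, ((if g z = affLin a b z then (1:ℝ) else 0)
          - (if g z = affLin a 0 z then 1 else 0))) / N := by
    intro a b
    rw [innerE_qfun, innerE_qfun, div_sub_div_same, ← Finset.sum_sub_distrib]
    congr 1
    exact Finset.sum_congr rfl fun z _ => by ring
  -- inner b-sum evaluation
  have hbsum : ∀ (a z : Fin n → ZMod p),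
      ∑ b ∈ Finset.univ.filter (fun b : ZMod p => b ≠ 0),
        ((if g z = affLin a b z then (1:ℝ) else 0) - (if g z = affLin a 0 z then 1 else 0)) *
          qfun (affLin a b) x y
      = (if ∑ i, (z i - x i) * a i = g z - y then (1:ℝ) else 0) - (p:ℝ)⁻¹ := by
    intro a z
    rw [Finset.filter_ne', Finset.sum_erase_eq_sub (Finset.mem_univ 0)]
    rw [sub_self, zero_mul, sub_zero]
    have hcond : ∀ b : ZMod p, (g z = affLin a b z) = (b = g z - ∑ i, a i * z i) := by
      intro b; unfold affLin
      exact propext (by constructor <;> intro h <;> first | linear_combination h | linear_combination -h)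
    simp only [hcond]
    simp only [sub_mul]
    rw [Finset.sum_sub_distrib]
    have h2 : ∑ b : ZMod p, qfun (affLin a b) x y = 0 := by
      unfold qfun affLin
      rw [Finset.sum_sub_distrib]
      have hc : ∀ b : ZMod p, ((∑ i, a i * x i) + b = y) = (b = y - ∑ i, a i * x i) :=
        fun b => propext (by constructor <;> intro h <;> first | linear_combination h | linear_combination -h)
      simp only [hc]
      rw [Finset.sum_ite_eq' Finset.univ (y - ∑ i, a i * x i) (fun _ => (1:ℝ)),
        if_pos (Finset.mem_univ _), Finset.sum_const, Finset.card_univ, ZMod.card,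
        nsmul_eq_mul, mul_inv_cancel₀ hp, sub_self]
    have h1 : ∑ b : ZMod p,
        (if b = g z - ∑ i, a i * z i then (1:ℝ) else 0) * qfun (affLin a b) x y
        = qfun (affLin a (g z - ∑ i, a i * z i)) x y := by
      simp only [ite_mul, one_mul, zero_mul]
      rw [Finset.sum_ite_eq' Finset.univ (g z - ∑ i, a i * z i)
        (fun b => qfun (affLin a b) x y), if_pos (Finset.mem_univ _)]
    rw [h1, ← Finset.mul_sum, h2, mul_zero, sub_zero]
    unfold qfun affLin
    have hsub : (∑ i, (z i * a i - x i * a i)) = (∑ i, a i * z i) - ∑ i, a i * x i := by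
      rw [← Finset.sum_sub_distrib]; exact Finset.sum_congr rfl fun i _ => by ring
    have hiff : ((∑ i, a i * x i) + (g z - ∑ i, a i * z i) = y)
        = ((∑ i, (z i * a i - x i * a i)) = g z - y) := by
      rw [hsub]
      exact propext (by
        constructor <;> intro h <;> first | linear_combination h | linear_combination -h)
    simp only [hiff, sub_mul]
  -- now the main computation
  calc qfun g x y
      = (∑ z : Fin n → ZMod p, ∑ a : Fin n → ZMod p,
          ((if ∑ i, (z i - x i) * a i = g z - y then (1:ℝ) else 0) - (p:ℝ)⁻¹)) / N := by
        rw [Finset.sum_eq_single_of_mem x (Finset.mem_univ x)]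
        · have hterm : ∀ a : Fin n → ZMod p,
              ((if ∑ i, (x i - x i) * a i = g x - y then (1:ℝ) else 0) - (p:ℝ)⁻¹)
              = ((if g x = y then (1:ℝ) else 0) - (p:ℝ)⁻¹) := by
            intro a
            congr 1
            have h0 : (∑ i, (x i - x i) * a i) = 0 := by simp
            rw [h0]
            congr 1
            exact propext (by
              constructor <;> intro h <;> first | linear_combination h | linear_combination -h)
          rw [Finset.sum_congr rfl fun a _ => hterm a, Finset.sum_const, Finset.card_univ,
            nsmul_eq_mul]
          rw [mul_comm, mul_div_assoc, div_self hN.ne', mul_one]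
          rfl
        · intro z _ hz
          have hd : (fun i => z i - x i) ≠ 0 := by
            intro h
            apply hz; funext i
            have := congrFun h i
            simpa [sub_eq_zero] using this
          exact count_lin_real (fun i => z i - x i) hd (g z - y)
    _ = ∑ a : Fin n → ZMod p, ∑ b ∈ Finset.univ.filter (fun b : ZMod p => b ≠ 0),
          (innerE (qfun g) (qfun (affLin a b)) - innerE (qfun g) (qfun (affLin a 0))) *
            qfun (affLin a b) x y := by
        symm
        calc ∑ a : Fin n → ZMod p, ∑ b ∈ Finset.univ.filter (fun b : ZMod p => b ≠ 0),
              (innerE (qfun g) (qfun (affLin a b)) - innerE (qfun g) (qfun (affLin a 0))) *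
                qfun (affLin a b) x y
            = ∑ a : Fin n → ZMod p, ∑ b ∈ Finset.univ.filter (fun b : ZMod p => b ≠ 0),
              ∑ z : Fin n → ZMod p,
                ((if g z = affLin a b z then (1:ℝ) else 0)
                  - (if g z = affLin a 0 z then 1 else 0)) * qfun (affLin a b) x y / N := by
              refine Finset.sum_congr rfl fun a _ => Finset.sum_congr rfl fun b _ => ?_
              rw [hα a b, div_mul_eq_mul_div, Finset.sum_mul, Finset.sum_div]
          _ = (∑ a : Fin n → ZMod p, ∑ b ∈ Finset.univ.filter (fun b : ZMod p => b ≠ 0),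
              ∑ z : Fin n → ZMod p,
                ((if g z = affLin a b z then (1:ℝ) else 0)
                  - (if g z = affLin a 0 z then 1 else 0)) * qfun (affLin a b) x y) / N := by
              simp only [← Finset.sum_div]
          _ = (∑ z : Fin n → ZMod p, ∑ a : Fin n → ZMod p,
              ∑ b ∈ Finset.univ.filter (fun b : ZMod p => b ≠ 0),
                ((if g z = affLin a b z then (1:ℝ) else 0)
                  - (if g z = affLin a 0 z then 1 else 0)) * qfun (affLin a b) x y) / N := by
              congr 1
              rw [Finset.sum_congr rfl fun a (_ : a ∈ Finset.univ) => Finset.sum_comm,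
                Finset.sum_comm]
          _ = (∑ z : Fin n → ZMod p, ∑ a : Fin n → ZMod p,
              ((if ∑ i, (z i - x i) * a i = g z - y then (1:ℝ) else 0) - (p:ℝ)⁻¹)) / N := by
              congr 1
              exact Finset.sum_congr rfl fun z _ => Finset.sum_congr rfl fun a _ => hbsum a z

lemma alpha_bounds {p n : ℕ} [Fact p.Prime] (g : (Fin n → ZMod p) → ZMod p)
    (a : Fin n → ZMod p) (b : ZMod p) :
    innerE (qfun g) (qfun (affLin a b)) - innerE (qfun g) (qfun (affLin a 0))
      ∈ Set.Icc (-1 : ℝ) 1 := by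
  have hN : (0:ℝ) < (Fintype.card (Fin n → ZMod p) : ℝ) := by exact_mod_cast Fintype.card_pos
  rw [innerE_qfun, innerE_qfun, div_sub_div_same]
  have hbound : ∀ h : (Fin n → ZMod p) → ZMod p,
      (0:ℝ) ≤ (∑ x : Fin n → ZMod p, (if g x = h x then (1:ℝ) else 0)) ∧
      (∑ x : Fin n → ZMod p, (if g x = h x then (1:ℝ) else 0))
        ≤ (Fintype.card (Fin n → ZMod p) : ℝ) := by
    intro h
    constructor
    · exact Finset.sum_nonneg fun x _ => by positivity
    · calc (∑ x : Fin n → ZMod p, (if g x = h x then (1:ℝ) else 0))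
          ≤ ∑ _x : Fin n → ZMod p, (1:ℝ) :=
            Finset.sum_le_sum fun x _ => by split <;> norm_num
        _ = (Fintype.card (Fin n → ZMod p) : ℝ) := by
            rw [Finset.sum_const, Finset.card_univ, nsmul_eq_mul, mul_one]
  obtain ⟨h1, h2⟩ := hbound (affLin a b)
  obtain ⟨h3, h4⟩ := hbound (affLin a 0)
  have hnum : (∑ x : Fin n → ZMod p, ((if g x = affLin a b x then (1:ℝ) else 0) - (p:ℝ)⁻¹))
      - (∑ x : Fin n → ZMod p, ((if g x = affLin a 0 x then (1:ℝ) else 0) - (p:ℝ)⁻¹))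
      = (∑ x : Fin n → ZMod p, (if g x = affLin a b x then (1:ℝ) else 0))
        - (∑ x : Fin n → ZMod p, (if g x = affLin a 0 x then (1:ℝ) else 0)) := by
    rw [Finset.sum_sub_distrib, Finset.sum_sub_distrib]; ring
  rw [hnum]
  constructor
  · rw [le_div_iff₀ hN]; linarith
  · rw [div_le_one hN]; linarith


lemma beta_unique {p n : ℕ} [Fact p.Prime] (g : (Fin n → ZMod p) → ZMod p)
    (β : (Fin n → ZMod p) → ZMod p → ℝ)
    (hβ : ∀ x y, qfun g x y =
        ∑ a : Fin n → ZMod p, ∑ b ∈ Finset.univ.filter (fun b : ZMod p => b ≠ 0),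
          β a b * qfun (affLin a b) x y)
    (a : Fin n → ZMod p) (b : ZMod p) (hb : b ≠ 0) :
    β a b = innerE (qfun g) (qfun (affLin a b)) - innerE (qfun g) (qfun (affLin a 0)) := by
  have hlin : ∀ c : ZMod p, innerE (qfun g) (qfun (affLin a c)) =
      ∑ a' : Fin n → ZMod p, ∑ b' ∈ Finset.univ.filter (fun b' : ZMod p => b' ≠ 0),
        β a' b' * innerE (qfun (affLin a' b')) (qfun (affLin a c)) := by
    intro c
    unfold innerE
    simp only [← mul_div_assoc, ← Finset.sum_div]
    congr 1
    calc ∑ x : Fin n → ZMod p, ∑ y : ZMod p, qfun g x y * qfun (affLin a c) x y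
          = ∑ x : Fin n → ZMod p, ∑ y : ZMod p, ∑ a' : Fin n → ZMod p,
              ∑ b' ∈ Finset.univ.filter (fun b' : ZMod p => b' ≠ 0),
                β a' b' * qfun (affLin a' b') x y * qfun (affLin a c) x y := by
            refine Finset.sum_congr rfl fun x _ => Finset.sum_congr rfl fun y _ => ?_
            rw [hβ x y, Finset.sum_mul]
            exact Finset.sum_congr rfl fun a' _ => by rw [Finset.sum_mul]
        _ = ∑ a' : Fin n → ZMod p,
              ∑ b' ∈ Finset.univ.filter (fun b' : ZMod p => b' ≠ 0),
              ∑ x : Fin n → ZMod p, ∑ y : ZMod p,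
                β a' b' * qfun (affLin a' b') x y * qfun (affLin a c) x y := by
            calc ∑ x : Fin n → ZMod p, ∑ y : ZMod p, ∑ a' : Fin n → ZMod p,
                  ∑ b' ∈ Finset.univ.filter (fun b' : ZMod p => b' ≠ 0),
                    β a' b' * qfun (affLin a' b') x y * qfun (affLin a c) x y
                = ∑ x : Fin n → ZMod p, ∑ a' : Fin n → ZMod p, ∑ y : ZMod p,
                  ∑ b' ∈ Finset.univ.filter (fun b' : ZMod p => b' ≠ 0),
                    β a' b' * qfun (affLin a' b') x y * qfun (affLin a c) x y :=
                  Finset.sum_congr rfl fun x _ => Finset.sum_comm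
              _ = ∑ a' : Fin n → ZMod p, ∑ x : Fin n → ZMod p, ∑ y : ZMod p,
                  ∑ b' ∈ Finset.univ.filter (fun b' : ZMod p => b' ≠ 0),
                    β a' b' * qfun (affLin a' b') x y * qfun (affLin a c) x y :=
                  Finset.sum_comm
              _ = ∑ a' : Fin n → ZMod p, ∑ x : Fin n → ZMod p,
                  ∑ b' ∈ Finset.univ.filter (fun b' : ZMod p => b' ≠ 0), ∑ y : ZMod p,
                    β a' b' * qfun (affLin a' b') x y * qfun (affLin a c) x y :=
                  Finset.sum_congr rfl fun a' _ =>
                    Finset.sum_congr rfl fun x _ => Finset.sum_comm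
              _ = ∑ a' : Fin n → ZMod p,
                  ∑ b' ∈ Finset.univ.filter (fun b' : ZMod p => b' ≠ 0),
                  ∑ x : Fin n → ZMod p, ∑ y : ZMod p,
                    β a' b' * qfun (affLin a' b') x y * qfun (affLin a c) x y :=
                  Finset.sum_congr rfl fun a' _ => Finset.sum_comm
        _ = ∑ a' : Fin n → ZMod p,
              ∑ b' ∈ Finset.univ.filter (fun b' : ZMod p => b' ≠ 0),
                β a' b' * ∑ x : Fin n → ZMod p, ∑ y : ZMod p,
                  qfun (affLin a' b') x y * qfun (affLin a c) x y := by
            refine Finset.sum_congr rfl fun a' _ => Finset.sum_congr rfl fun b' _ => ?_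
            rw [Finset.mul_sum]
            refine Finset.sum_congr rfl fun x _ => ?_
            rw [Finset.mul_sum]
            exact Finset.sum_congr rfl fun y _ => by ring
  rw [hlin b, hlin 0]
  simp only [innerE_affLin]
  rw [Finset.sum_eq_single_of_mem a (Finset.mem_univ a) ?side1,
    Finset.sum_eq_single_of_mem a (Finset.mem_univ a) ?side2]
  case side1 =>
    intro a' _ ha'
    exact Finset.sum_eq_zero fun b' _ => by rw [if_neg ha', mul_zero]
  case side2 =>
    intro a' _ ha'
    exact Finset.sum_eq_zero fun b' _ => by rw [if_neg ha', mul_zero]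
  simp only [if_true]
  rw [← Finset.sum_sub_distrib]
  rw [Finset.sum_congr rfl (fun b' _ => show
      β a b' * ((if b' = b then (1:ℝ) else 0) - (p:ℝ)⁻¹)
        - β a b' * ((if b' = (0:ZMod p) then (1:ℝ) else 0) - (p:ℝ)⁻¹)
      = β a b' * ((if b' = b then (1:ℝ) else 0) - (if b' = (0:ZMod p) then (1:ℝ) else 0))
      from by ring)]
  rw [Finset.sum_eq_single_of_mem b (by simp [hb]) ?side3]
  · simp [hb]
  case side3 =>
    intro b' hb' hne
    rw [Finset.mem_filter] at hb'
    rw [if_neg hne, if_neg hb'.2, sub_zero, mul_zero]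

end Helpers

/-- Fourier decomposition over the simplex: for every `g : F^n → F` there are unique real
coefficients `α_{a,b}` (`a ∈ F^n`, `b ≠ 0`) with
`q(g) = Σ_{a, b ≠ 0} α_{a,b} q(ℓ_{a,b})`; moreover they are given by
`α_{a,b} = ⟨q(g), q(ℓ_{a,b})⟩ - ⟨q(g), q(ℓ_{a,0})⟩` and lie in `[-1, 1]`. -/
theorem fourier_simplex_decomposition (p : ℕ) [Fact p.Prime] (n : ℕ)
    (g : (Fin n → ZMod p) → ZMod p) :
    ∃ α : (Fin n → ZMod p) → ZMod p → ℝ,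
      (∀ x y, qfun g x y =
        ∑ a : Fin n → ZMod p, ∑ b ∈ Finset.univ.filter (fun b : ZMod p => b ≠ 0),
          α a b * qfun (affLin a b) x y) ∧
      (∀ a : Fin n → ZMod p, ∀ b : ZMod p, b ≠ 0 →
        α a b = innerE (qfun g) (qfun (affLin a b)) - innerE (qfun g) (qfun (affLin a 0))) ∧
      (∀ a : Fin n → ZMod p, ∀ b : ZMod p, b ≠ 0 → α a b ∈ Set.Icc (-1 : ℝ) 1) ∧
      (∀ β : (Fin n → ZMod p) → ZMod p → ℝ,
        (∀ x y, qfun g x y =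
          ∑ a : Fin n → ZMod p, ∑ b ∈ Finset.univ.filter (fun b : ZMod p => b ≠ 0),
            β a b * qfun (affLin a b) x y) →
        ∀ a : Fin n → ZMod p, ∀ b : ZMod p, b ≠ 0 → β a b = α a b) := by
  classical
  refine ⟨fun a b => innerE (qfun g) (qfun (affLin a b)) - innerE (qfun g) (qfun (affLin a 0)),
    ?_, ?_, ?_, ?_⟩
  · exact fun x y => decomp_exists g x y
  · exact fun a b _ => rfl
  · exact fun a b _ => alpha_bounds g a b
  · exact fun β hβ a b hb => beta_unique g β hβ a b hb
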